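/- (CARMS unbiasedness, Theorem 3) Let C ≥ 1 and N ≥ 2, let p : Fin C → ℝ be a probability vector, let f : Fin C → ℝ, and let Q : (Fin N → Fin C) → ℝ be an N-variate probability mass function (Q ≥ 0, Σ_z Q(z) = 1) such that for all ordered pairs n ≠ m and all i, j : Fin C, the bivariate marginal Σ over {z : z(n) = i and z(m) = j} of Q(z) equals q(i,j), where q has both univariate marginals equal to p and q(i,j) > 0 for all i ≠ j with p_i · p_j > 0. Then the CARMS estimator is unbiased: Σ_z Q(z) • [(1/(N·(N−1))) · Σ over ordered pairs n ≠ m of (1/2) · (f(z(n)) − f(z(m))) · (p_{z(n)} · p_{z(m)} / q(z(n), z(m))) • (e_{z(n)} − e_{z(m)})] = Σ_i p_i · f(i) • (e_i − p). -/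

import Mathlib

open Finset

/-- The one-hot vector `e_i : Fin C → ℝ` with `(e_i)_k = if k = i then 1 else 0`. -/
def oneHot {C : ℕ} (i : Fin C) : Fin C → ℝ :=
  fun k => if k = i then 1 else 0

/-- CARMS unbiasedness, Theorem 3: the CARMS estimator, averaging the
weighted two-sample estimator (with importance ratio `p_i p_j / q(i,j)`) over all ordered
pairs of the `N` jointly distributed samples, is unbiased for `Σ_i p_i · f(i) • (e_i − p)`. -/
lemma stepC {C : ℕ} (p f : Fin C → ℝ) (hp1 : ∑ i, p i = 1) :
    (∑ i, ∑ j, ((1 / 2) * (f i - f j) * (p i * p j)) • (oneHot i - oneHot j))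
      = ∑ i, (p i * f i) • (oneHot i - p) := by
  funext k
  simp only [Finset.sum_apply, Pi.smul_apply, Pi.sub_apply, oneHot, smul_eq_mul]
  have hl : ∀ i : Fin C, ∑ j, (1 / 2) * (f i - f j) * (p i * p j) *
      ((if k = i then (1:ℝ) else 0) - (if k = j then 1 else 0))
      = (if k = i then (1:ℝ) else 0) * (∑ j, (1/2) * (f i - f j) * (p i * p j))
        - (1/2) * (f i - f k) * (p i * p k) := by
    intro i
    rw [Finset.mul_sum,
      show ((1:ℝ)/2) * (f i - f k) * (p i * p k)
        = ∑ j, if k = j then (1/2) * (f i - f j) * (p i * p j) else 0 by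
          rw [Finset.sum_ite_eq]; simp,
      ← Finset.sum_sub_distrib]
    refine Finset.sum_congr rfl fun j _ => ?_
    show _ = _ * _ - (if k = j then (1:ℝ)/2 * (f i - f j) * (p i * p j) else 0)
    split_ifs <;> ring
  rw [Finset.sum_congr rfl fun i _ => hl i, Finset.sum_sub_distrib]
  have h2 : (∑ i, (if k = i then (1:ℝ) else 0) * (∑ j, (1/2) * (f i - f j) * (p i * p j)))
      = ∑ j, (1/2) * (f k - f j) * (p k * p j) := by
    rw [show (fun i => (if k = i then (1:ℝ) else 0) * (∑ j, (1/2) * (f i - f j) * (p i * p j)))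
      = fun i => if k = i then (∑ j, (1/2) * (f i - f j) * (p i * p j)) else 0 from
        funext fun i => by split_ifs <;> ring, Finset.sum_ite_eq]
    simp
  rw [h2]
  have e1 : ∑ j, (1/2) * (f k - f j) * (p k * p j)
      = (1/2) * (f k * p k) - (1/2) * p k * ∑ j, f j * p j := by
    rw [show (fun j => (1/2) * (f k - f j) * (p k * p j))
      = fun j => ((1/2) * (f k * p k)) * p j - ((1/2) * p k) * (f j * p j) from
        funext fun j => by ring, Finset.sum_sub_distrib, ← Finset.mul_sum, ← Finset.mul_sum, hp1]
    ring
  have e2 : ∑ i, (1/2) * (f i - f k) * (p i * p k)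
      = (1/2) * p k * (∑ j, f j * p j) - (1/2) * (f k * p k) := by
    rw [show (fun i => (1/2) * (f i - f k) * (p i * p k))
      = fun i => ((1/2) * p k) * (f i * p i) - ((1/2) * (f k * p k)) * p i from
        funext fun i => by ring, Finset.sum_sub_distrib, ← Finset.mul_sum, ← Finset.mul_sum, hp1]
    ring
  have e3 : ∑ i, p i * f i * ((if k = i then (1:ℝ) else 0) - p k)
      = p k * f k - (∑ i, f i * p i) * p k := by
    rw [show (fun i => p i * f i * ((if k = i then (1:ℝ) else 0) - p k))
      = fun i => (if k = i then p i * f i else 0) - p k * (f i * p i) from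
        funext fun i => by split_ifs <;> ring,
      Finset.sum_sub_distrib, Finset.sum_ite_eq, ← Finset.mul_sum]
    simp; ring
  rw [e1, e2, e3]; ring

example : True := trivial

lemma stepKey {C : ℕ} (p f : Fin C → ℝ) (hp0 : ∀ i, 0 ≤ p i)
    (q : Fin C × Fin C → ℝ)
    (hpos : ∀ i j, i ≠ j → 0 < p i * p j → 0 < q (i, j)) (i j : Fin C) :
    q (i, j) • (((1 / 2) * (f i - f j) * (p i * p j / q (i, j))) • (oneHot i - oneHot j))
      = ((1 / 2) * (f i - f j) * (p i * p j)) • (oneHot i - oneHot j) := by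
  by_cases hij : i = j
  · subst hij; simp
  by_cases hq : q (i, j) = 0
  · have hpp : p i * p j = 0 := by
      by_contra h
      exact (hpos i j hij
        (lt_of_le_of_ne (mul_nonneg (hp0 i) (hp0 j)) (Ne.symm h))).ne' hq
    simp [hq, hpp]
  · rw [smul_smul]
    congr 1
    field_simp

theorem carms_unbiased {C N : ℕ} (hC : 1 ≤ C) (hN : 2 ≤ N) (p : Fin C → ℝ)
    (hp0 : ∀ i, 0 ≤ p i) (hp1 : ∑ i, p i = 1) (f : Fin C → ℝ)
    (Q : (Fin N → Fin C) → ℝ) (hQ0 : ∀ z, 0 ≤ Q z) (hQ1 : ∑ z, Q z = 1)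
    (q : Fin C × Fin C → ℝ)
    (hbiv : ∀ n m : Fin N, n ≠ m → ∀ i j : Fin C,
      ∑ z ∈ univ.filter (fun z : Fin N → Fin C => z n = i ∧ z m = j), Q z = q (i, j))
    (hmarg1 : ∀ i, ∑ j, q (i, j) = p i)
    (hmarg2 : ∀ j, ∑ i, q (i, j) = p j)
    (hpos : ∀ i j, i ≠ j → 0 < p i * p j → 0 < q (i, j)) :
    ∑ z : Fin N → Fin C, Q z •
        ((1 / ((N : ℝ) * ((N : ℝ) - 1))) •
          ∑ n, ∑ m ∈ univ.filter (fun m => m ≠ n),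
            ((1 / 2) * (f (z n) - f (z m)) * (p (z n) * p (z m) / q (z n, z m)))
              • (oneHot (z n) - oneHot (z m)))
      = ∑ i, (p i * f i) • (oneHot i - p) := by
  classical
  set g : Fin C → Fin C → (Fin C → ℝ) := fun i j =>
    ((1 / 2) * (f i - f j) * (p i * p j / q (i, j))) • (oneHot i - oneHot j) with hg
  set G : Fin C → ℝ := ∑ i, (p i * f i) • (oneHot i - p) with hG
  -- expectation of a single ordered pair
  have pairExp : ∀ n m : Fin N, n ≠ m →
      (∑ z : Fin N → Fin C, Q z • g (z n) (z m)) = G := by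
    intro n m hnm
    have h1 : (∑ z : Fin N → Fin C, Q z • g (z n) (z m))
        = ∑ ij : Fin C × Fin C,
            ∑ z ∈ univ.filter (fun z : Fin N → Fin C => (z n, z m) = ij),
              Q z • g (z n) (z m) :=
      (Finset.sum_fiberwise univ (fun z : Fin N → Fin C => ((z n, z m) : Fin C × Fin C))
        (fun z => Q z • g (z n) (z m))).symm
    rw [h1]
    have h2 : ∀ ij : Fin C × Fin C,
        (∑ z ∈ univ.filter (fun z : Fin N → Fin C => (z n, z m) = ij),
          Q z • g (z n) (z m)) = q ij • g ij.1 ij.2 := by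
      intro ij
      rw [← hbiv n m hnm ij.1 ij.2, Finset.sum_smul]
      refine Finset.sum_congr ?_ fun z hz => ?_
      · apply Finset.filter_congr
        intro z _
        simp [Prod.ext_iff]
      · simp only [Finset.mem_filter] at hz
        rw [hz.2.1, hz.2.2]
    rw [Finset.sum_congr rfl fun ij _ => h2 ij, hG]
    rw [← stepC p f hp1, Fintype.sum_prod_type]
    exact Finset.sum_congr rfl fun i _ => Finset.sum_congr rfl fun j _ =>
      stepKey p f hp0 q hpos i j
  -- rearrange and count
  have swap : (∑ z : Fin N → Fin C, Q z •
      ∑ n, ∑ m ∈ univ.filter (fun m => m ≠ n), g (z n) (z m))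
      = ∑ n, ∑ m ∈ univ.filter (fun m => m ≠ n),
          ∑ z : Fin N → Fin C, Q z • g (z n) (z m) := by
    simp_rw [Finset.smul_sum]
    rw [Finset.sum_comm]
    exact Finset.sum_congr rfl fun n _ => Finset.sum_comm
  have hcast : (((N * (N - 1) : ℕ) : ℝ)) = (N : ℝ) * ((N : ℝ) - 1) := by
    push_cast [Nat.cast_sub (le_trans one_le_two hN)]
    ring
  have hne : ((N : ℝ) * ((N : ℝ) - 1)) ≠ 0 := by
    have h2 : (2 : ℝ) ≤ (N : ℝ) := by exact_mod_cast hN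
    have : (0:ℝ) < (N : ℝ) * ((N : ℝ) - 1) := mul_pos (by linarith) (by linarith)
    exact this.ne'
  calc ∑ z : Fin N → Fin C, Q z •
        ((1 / ((N : ℝ) * ((N : ℝ) - 1))) •
          ∑ n, ∑ m ∈ univ.filter (fun m => m ≠ n), g (z n) (z m))
      = (1 / ((N : ℝ) * ((N : ℝ) - 1))) • ∑ z : Fin N → Fin C, Q z •
          ∑ n, ∑ m ∈ univ.filter (fun m => m ≠ n), g (z n) (z m) := by
        rw [Finset.smul_sum]
        exact Finset.sum_congr rfl fun z _ => smul_comm _ _ _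
    _ = (1 / ((N : ℝ) * ((N : ℝ) - 1))) • ∑ n : Fin N,
          ∑ m ∈ univ.filter (fun m => m ≠ n), G := by
        rw [swap]
        congr 1
        refine Finset.sum_congr rfl fun n _ => Finset.sum_congr rfl fun m hm => ?_
        exact pairExp n m (Ne.symm (Finset.mem_filter.mp hm).2)
    _ = (1 / ((N : ℝ) * ((N : ℝ) - 1))) • ((N * (N - 1) : ℕ) • G) := by
        congr 1
        rw [Finset.sum_congr rfl fun n _ => Finset.sum_const G]
        have hcard : ∀ n : Fin N, (univ.filter (fun m => m ≠ n)).card = N - 1 := by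
          intro n
          rw [Finset.filter_ne' univ n, Finset.card_erase_of_mem (Finset.mem_univ n)]
          simp
        rw [Finset.sum_congr rfl fun n _ => by rw [hcard n]]
        rw [Finset.sum_const, Finset.card_univ, Fintype.card_fin, smul_smul]
    _ = G := by
        rw [← Nat.cast_smul_eq_nsmul ℝ, smul_smul, hcast, one_div,
          inv_mul_cancel₀ hne, one_smul]
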